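/- arXiv:1107.2524 — 2 statements merged into one kernel-verified Lean document; each statement's English description precedes it below -/
import Mathlib

section
/- For 0 < L < L₀ and x₋ < x₀ < x₊ with N(x₋) = N(x₊) = L, the iterated integral identity holds: ∫_{L}^{L₀} ∫_{x₋(L')}^{x₊(L')} [L' / (√(N(x)² − L'²) · √(L'² − L²))] dx dL' = (π/2)(x₊(L) − x₋(L)), where the order of integration may be exchanged since the integrand is nonnegative, and the inner L'-integral evaluates via ∫_{L}^{N(x)} L' dL' / (√(N(x)²−L'²)√(L'²−L²)) = π/2. -/
open intervalIntegral Real MeasureTheory Set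

lemma key_deriv (a b : ℝ) (ha : 0 < a) (hab : a < b) {t : ℝ} (ht : t ∈ Set.Ioo a b) :
    HasDerivAt (fun t => Real.arcsin ((2*t^2 - a^2 - b^2)/(b^2 - a^2)))
      (2 * (t / (Real.sqrt (b^2 - t^2) * Real.sqrt (t^2 - a^2)))) t := by
  obtain ⟨hta, htb⟩ := ht
  have ht0 : 0 < t := ha.trans hta
  have hb2 : (0:ℝ) < b^2 - t^2 := by nlinarith
  have ha2 : (0:ℝ) < t^2 - a^2 := by nlinarith
  have hd : (0:ℝ) < b^2 - a^2 := by nlinarith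
  set u : ℝ → ℝ := fun t => (2*t^2 - a^2 - b^2)/(b^2 - a^2) with hu
  have hu' : HasDerivAt u (4*t/(b^2-a^2)) t := by
    have h1 : HasDerivAt (fun t : ℝ => 2*t^2 - a^2 - b^2) (4*t) t := by
      have := (hasDerivAt_pow 2 t).const_mul (2:ℝ)
      simpa using (this.sub_const (a^2)).sub_const (b^2) |>.congr_deriv (by ring)
    simpa using h1.div_const (b^2 - a^2)
  have hu1 : u t ≠ -1 := by
    rw [hu]; intro h
    rw [div_eq_iff hd.ne'] at h
    nlinarith
  have hu2 : u t ≠ 1 := by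
    rw [hu]; intro h
    rw [div_eq_iff hd.ne'] at h
    nlinarith
  have harc := (Real.hasDerivAt_arcsin hu1 hu2).comp t hu'
  refine harc.congr_deriv ?_
  have h1u : 1 - u t ^ 2 = 4*(b^2 - t^2)*(t^2 - a^2)/(b^2-a^2)^2 := by
    rw [hu]; field_simp; ring
  have hsq : Real.sqrt (1 - u t ^ 2) = 2 * Real.sqrt (b^2 - t^2) * Real.sqrt (t^2 - a^2) / (b^2 - a^2) := by
    rw [h1u]
    rw [show 4*(b^2 - t^2)*(t^2 - a^2)/(b^2-a^2)^2
        = (2 * Real.sqrt (b^2 - t^2) * Real.sqrt (t^2 - a^2) / (b^2 - a^2))^2 by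
      rw [div_pow, mul_pow, mul_pow, Real.sq_sqrt hb2.le, Real.sq_sqrt ha2.le]; ring]
    exact Real.sqrt_sq (by positivity)
  rw [hsq]
  have s1 : (0:ℝ) < Real.sqrt (b^2 - t^2) := Real.sqrt_pos.mpr hb2
  have s2 : (0:ℝ) < Real.sqrt (t^2 - a^2) := Real.sqrt_pos.mpr ha2
  field_simp
  ring

lemma key_integrable (a b : ℝ) (ha : 0 < a) (hab : a < b) :
    IntegrableOn (fun t => t / (Real.sqrt (b^2 - t^2) * Real.sqrt (t^2 - a^2))) (Set.Ioc a b) := by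
  have hd : (0:ℝ) < b^2 - a^2 := by nlinarith
  have hcont : ContinuousOn (fun t => Real.arcsin ((2*t^2 - a^2 - b^2)/(b^2 - a^2))) (Set.Icc a b) :=
    (Real.continuous_arcsin.comp (by continuity)).continuousOn
  have h := integrableOn_deriv_of_nonneg hcont (fun x hx => key_deriv a b ha hab hx)
    (fun x hx => by
      have : (0:ℝ) ≤ x / (Real.sqrt (b^2 - x^2) * Real.sqrt (x^2 - a^2)) :=
        div_nonneg (le_of_lt (ha.trans hx.1)) (by positivity)
      linarith)
  have h2 := h.const_mul (2⁻¹ : ℝ)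
  have heq : (fun x => (2⁻¹:ℝ) * (2 * (x / (Real.sqrt (b^2 - x^2) * Real.sqrt (x^2 - a^2)))))
      = fun x => x / (Real.sqrt (b^2 - x^2) * Real.sqrt (x^2 - a^2)) := funext fun x => by ring
  rwa [heq] at h2

lemma key_eval (a b : ℝ) (ha : 0 < a) (hab : a < b) :
    ∫ t in a..b, t / (Real.sqrt (b^2 - t^2) * Real.sqrt (t^2 - a^2)) = π / 2 := by
  have hd : (0:ℝ) < b^2 - a^2 := by nlinarith
  have hcont : ContinuousOn (fun t => Real.arcsin ((2*t^2 - a^2 - b^2)/(b^2 - a^2))) (Set.Icc a b) :=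
    (Real.continuous_arcsin.comp (by continuity)).continuousOn
  have hint : IntervalIntegrable (fun t => 2 * (t / (Real.sqrt (b^2 - t^2) * Real.sqrt (t^2 - a^2)))) volume a b := by
    rw [intervalIntegrable_iff_integrableOn_Ioc_of_le hab.le]
    exact (key_integrable a b ha hab).const_mul 2
  have heq := integral_eq_sub_of_hasDeriv_right_of_le hab.le hcont
    (fun x hx => (key_deriv a b ha hab hx).hasDerivWithinAt) hint
  have hfa : (2*a^2 - a^2 - b^2)/(b^2 - a^2) = -1 := by field_simp; ring
  have hfb : (2*b^2 - a^2 - b^2)/(b^2 - a^2) = 1 := by field_simp; ring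
  rw [hfa, hfb, Real.arcsin_one, Real.arcsin_neg_one] at heq
  have h2 : ∫ t in a..b, 2 * (t / (Real.sqrt (b^2 - t^2) * Real.sqrt (t^2 - a^2)))
      = 2 * ∫ t in a..b, t / (Real.sqrt (b^2 - t^2) * Real.sqrt (t^2 - a^2)) :=
    intervalIntegral.integral_const_mul 2 _
  rw [h2] at heq
  linarith


open intervalIntegral Real

/-- The iterated integral identity used in the derivation of the inversion formula,
together with the key single-variable evaluation of the inner integral. -/
theorem stmt3 (N : ℝ → ℝ) (x₀ L₀ L : ℝ)
    (hcont : Continuous N)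
    (hmono : StrictMonoOn N (Set.Iic x₀))
    (hanti : StrictAntiOn N (Set.Ici x₀))
    (hmax : N x₀ = L₀)
    (hL : 0 < L) (hLL₀ : L < L₀)
    (xm xp : ℝ → ℝ)
    (hturn : ∀ L' ∈ Set.Ico L L₀,
      xm L' ≤ x₀ ∧ x₀ ≤ xp L' ∧ N (xm L') = L' ∧ N (xp L') = L') :
    (∀ x ∈ Set.Ioo (xm L) (xp L),
      ∫ L' in L..N x, L' / (Real.sqrt ((N x)^2 - L'^2) * Real.sqrt (L'^2 - L^2))
        = π / 2) ∧
    (∫ L' in L..L₀, ∫ x in xm L'..xp L',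
        L' / (Real.sqrt ((N x)^2 - L'^2) * Real.sqrt (L'^2 - L^2)))
      = (π / 2) * (xp L - xm L) := by
  obtain ⟨hA0, h0B, hNA, hNB⟩ := hturn L ⟨le_refl L, hLL₀⟩
  set A := xm L with hA
  set B := xp L with hB
  set F : ℝ → ℝ → ℝ :=
    fun L' x => L' / (Real.sqrt ((N x)^2 - L'^2) * Real.sqrt (L'^2 - L^2)) with hF
  -- strictness at the turning points
  have hAx₀ : A < x₀ := by
    rcases lt_or_eq_of_le hA0 with h | h
    · exact h
    · exfalso; rw [h, hmax] at hNA; exact absurd hNA (by linarith)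
  have hx₀B : x₀ < B := by
    rcases lt_or_eq_of_le h0B with h | h
    · exact h
    · exfalso; rw [← h, hmax] at hNB; exact absurd hNB (by linarith)
  have hAB : A < B := hAx₀.trans hx₀B
  -- N is > L strictly inside
  have hNgt : ∀ x ∈ Set.Ioo A B, L < N x := by
    intro x hx
    rcases le_total x x₀ with h | h
    · have := hmono (Set.mem_Iic.2 hA0) (Set.mem_Iic.2 h) hx.1
      rwa [hNA] at this
    · have := hanti (Set.mem_Ici.2 h) (Set.mem_Ici.2 hx₀B.le) hx.2
      rwa [hNB] at this
  have hNle : ∀ x, N x ≤ L₀ := by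
    intro x
    rcases le_total x x₀ with h | h
    · have := hmono.monotoneOn (Set.mem_Iic.2 h) (Set.mem_Iic.2 le_rfl) h
      rwa [hmax] at this
    · have := hanti.antitoneOn (Set.mem_Ici.2 le_rfl) (Set.mem_Ici.2 h) h
      rwa [hmax] at this
  -- vanishing of the integrand
  have hvanish : ∀ L' x, 0 < N x → N x ≤ L' → F L' x = 0 := by
    intro L' x h0 hle
    have : (N x)^2 - L'^2 ≤ 0 := by nlinarith
    have h1 : Real.sqrt ((N x)^2 - L'^2) = 0 := Real.sqrt_eq_zero'.mpr this
    rw [hF]; simp only [h1, zero_mul, div_zero]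
  have part1 : ∀ x ∈ Set.Ioo A B,
      ∫ L' in L..N x, L' / (Real.sqrt ((N x)^2 - L'^2) * Real.sqrt (L'^2 - L^2)) = π / 2 :=
    fun x hx => key_eval L (N x) hL (hNgt x hx)
  refine ⟨part1, ?_⟩
  -- almost-everywhere membership in open intervals
  have hneB : ∀ᵐ x : ℝ ∂volume, x ≠ B := by
    simp only [ae_iff, not_not, Set.setOf_eq_eq_singleton]
    exact measure_singleton B
  have hneL₀ : ∀ᵐ x : ℝ ∂volume, x ≠ L₀ := by
    simp only [ae_iff, not_not, Set.setOf_eq_eq_singleton]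
    exact measure_singleton L₀
  have haeB : ∀ᵐ x ∂(volume.restrict (Set.Ioc A B)), x ∈ Set.Ioo A B := by
    filter_upwards [ae_restrict_mem measurableSet_Ioc, ae_restrict_of_ae hneB] with x hx hxB
    exact ⟨hx.1, lt_of_le_of_ne hx.2 hxB⟩
  have haeL : ∀ᵐ L' ∂(volume.restrict (Set.Ioc L L₀)), L' ∈ Set.Ioo L L₀ := by
    filter_upwards [ae_restrict_mem measurableSet_Ioc, ae_restrict_of_ae hneL₀] with x hx hxB
    exact ⟨hx.1, lt_of_le_of_ne hx.2 hxB⟩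
  -- step B : inner integral in L'
  have stepB : ∀ x ∈ Set.Ioo A B,
      IntegrableOn (fun L' => F L' x) (Set.Ioc L L₀) ∧
        (∫ L' in Set.Ioc L L₀, F L' x) = π/2 := by
    intro x hx
    have hLM : L < N x := hNgt x hx
    have hML₀ : N x ≤ L₀ := hNle x
    have h0M : 0 < N x := hL.trans hLM
    have hzero : ∀ L' ∈ Set.Ioc (N x) L₀, F L' x = 0 := fun L' hL' => hvanish L' x h0M hL'.1.le
    have hi1 : IntegrableOn (fun L' => F L' x) (Set.Ioc L (N x)) := key_integrable L (N x) hL hLM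
    have hi2 : IntegrableOn (fun L' => F L' x) (Set.Ioc (N x) L₀) :=
      (integrableOn_zero).congr_fun (fun L' hL' => (hzero L' hL').symm) measurableSet_Ioc
    have hsplit : Set.Ioc L L₀ = Set.Ioc L (N x) ∪ Set.Ioc (N x) L₀ :=
      (Set.Ioc_union_Ioc_eq_Ioc hLM.le hML₀).symm
    constructor
    · rw [hsplit]; exact hi1.union hi2
    · rw [hsplit, setIntegral_union (Set.Ioc_disjoint_Ioc_of_le le_rfl) measurableSet_Ioc hi1 hi2]
      have h2 : (∫ L' in Set.Ioc (N x) L₀, F L' x) = 0 := by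
        rw [setIntegral_congr_fun measurableSet_Ioc (fun L' hL' => hzero L' hL')]
        simp
      have h1 : (∫ L' in Set.Ioc L (N x), F L' x) = π/2 := by
        rw [← intervalIntegral.integral_of_le hLM.le]
        exact key_eval L (N x) hL hLM
      rw [h1, h2, add_zero]
  -- step A : inner integral in x extends to the full interval
  have stepA : ∀ L' ∈ Set.Ioo L L₀,
      (∫ x in xm L'..xp L', F L' x) = ∫ x in Set.Ioc A B, F L' x := by
    intro L' hL'
    obtain ⟨hc0, h0d, hNc, hNd⟩ := hturn L' ⟨hL'.1.le, hL'.2⟩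
    set c := xm L' with hc
    set d := xp L' with hd
    have hAc : A < c := by
      by_contra hcon
      push_neg at hcon
      have := hmono.monotoneOn (Set.mem_Iic.2 hc0) (Set.mem_Iic.2 hA0) hcon
      rw [hNc, hNA] at this; linarith [hL'.1]
    have hdB : d < B := by
      by_contra hcon
      push_neg at hcon
      have := hanti.antitoneOn (Set.mem_Ici.2 hx₀B.le) (Set.mem_Ici.2 h0d) hcon
      rw [hNd, hNB] at this; linarith [hL'.1]
    have hcd : c ≤ d := hc0.trans h0d
    have hsub : Set.Icc c d ⊆ Set.Ioc A B := fun y hy => ⟨hAc.trans_le hy.1, hy.2.trans hdB.le⟩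
    have hEq : ∀ x ∈ Set.Ioc A B, F L' x = Set.indicator (Set.Icc c d) (F L') x := by
      intro x hx
      by_cases hmem : x ∈ Set.Icc c d
      · rw [Set.indicator_of_mem hmem]
      · rw [Set.indicator_of_notMem hmem]
        rcases lt_or_ge x c with h | hcx
        · have hx0 : x ≤ x₀ := h.le.trans hc0
          have h1 : N x < L' := by
            have := hmono (Set.mem_Iic.2 hx0) (Set.mem_Iic.2 hc0) h
            rwa [hNc] at this
          have h2 : L < N x := by
            have := hmono (Set.mem_Iic.2 hA0) (Set.mem_Iic.2 hx0) hx.1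
            rwa [hNA] at this
          exact hvanish L' x (hL.trans h2) h1.le
        · have h : d < x := by simpa [Set.mem_Icc, hcx] using hmem
          have hx0 : x₀ ≤ x := h0d.trans h.le
          have h1 : N x < L' := by
            have := hanti (Set.mem_Ici.2 h0d) (Set.mem_Ici.2 hx0) h
            rwa [hNd] at this
          have h2 : L ≤ N x := by
            have := hanti.antitoneOn (Set.mem_Ici.2 hx0) (Set.mem_Ici.2 hx₀B.le) hx.2
            rwa [hNB] at this
          exact hvanish L' x (hL.trans_le h2) h1.le
    calc ∫ x in c..d, F L' x
        = ∫ x in Set.Ioc c d, F L' x := intervalIntegral.integral_of_le hcd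
      _ = ∫ x in Set.Icc c d, F L' x := (MeasureTheory.integral_Icc_eq_integral_Ioc).symm
      _ = ∫ x in Set.Ioc A B, Set.indicator (Set.Icc c d) (F L') x := by
          rw [setIntegral_indicator measurableSet_Icc, Set.inter_eq_self_of_subset_right hsub]
      _ = ∫ x in Set.Ioc A B, F L' x := (setIntegral_congr_fun measurableSet_Ioc hEq).symm
  -- measurability
  have hFm : Measurable (fun p : ℝ × ℝ => F p.1 p.2) := by
    rw [hF]
    refine Measurable.div measurable_fst (Measurable.mul ?_ ?_)
    · exact (((hcont.measurable.comp measurable_snd).pow_const 2).sub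
        (measurable_fst.pow_const 2)).sqrt
    · exact ((measurable_fst.pow_const 2).sub measurable_const).sqrt
  -- product integrability
  have hProd : Integrable (fun p : ℝ × ℝ => F p.1 p.2)
      ((volume.restrict (Set.Ioc L L₀)).prod (volume.restrict (Set.Ioc A B))) := by
    refine (integrable_prod_iff' hFm.aestronglyMeasurable).2 ⟨?_, ?_⟩
    · filter_upwards [haeB] with x hx
      exact (stepB x hx).1
    · have hconst : Integrable (fun _ : ℝ => π/2) (volume.restrict (Set.Ioc A B)) :=
        integrableOn_const measure_Ioc_lt_top.ne
      refine hconst.congr ?_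
      filter_upwards [haeB] with x hx
      have heqn : Set.EqOn (fun L' => ‖F L' x‖) (fun L' => F L' x) (Set.Ioc L L₀) := by
        intro L' hL'
        simp only [hF]
        exact Real.norm_of_nonneg (div_nonneg (hL.trans hL'.1).le (by positivity))
      show (π/2 : ℝ) = ∫ L' in Set.Ioc L L₀, ‖F L' x‖
      rw [setIntegral_congr_fun measurableSet_Ioc heqn, (stepB x hx).2]
  have hswap := MeasureTheory.integral_integral_swap
    (f := fun L' x => F L' x) (μ := volume.restrict (Set.Ioc L L₀))
    (ν := volume.restrict (Set.Ioc A B)) hProd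
  show (∫ L' in L..L₀, ∫ x in xm L'..xp L', F L' x) = π/2 * (B - A)
  calc ∫ L' in L..L₀, ∫ x in xm L'..xp L', F L' x
      = ∫ L' in Set.Ioc L L₀, ∫ x in xm L'..xp L', F L' x :=
        intervalIntegral.integral_of_le hLL₀.le
    _ = ∫ L' in Set.Ioc L L₀, ∫ x in Set.Ioc A B, F L' x := by
        refine integral_congr_ae ?_
        filter_upwards [haeL] with L' hL'
        exact stepA L' hL'
    _ = ∫ x in Set.Ioc A B, ∫ L' in Set.Ioc L L₀, F L' x := hswap
    _ = ∫ x in Set.Ioc A B, (π/2 : ℝ) := by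
        refine integral_congr_ae ?_
        filter_upwards [haeB] with x hx
        exact (stepB x hx).2
    _ = π/2 * (B - A) := by
        rw [setIntegral_const, Real.volume_real_Ioc, max_eq_left (by linarith), smul_eq_mul]
        ring
end

section
/- If a measurable function N : [x₋, X] → [L_m, N_m] with 0 < L_m ≤ N_m < ∞ satisfies the moment conditions ∫_{x₋}^{X} N(x)^{−(2n+1)} dx = 1/(2n+1) for all n ∈ ℕ₀, then for every real (or complex) L: e^{L²} = ∫_{x₋}^{X} (1 + 2(L/N(x))²)·exp((L/N(x))²) dx / N(x). -/
open MeasureTheory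

lemma hasSum_exp_real (a : ℝ) : HasSum (fun n : ℕ => a ^ n / n.factorial) (Real.exp a) := by
  rw [Real.exp_eq_exp_ℝ]
  exact NormedSpace.expSeries_div_hasSum_exp a

lemma key (a : ℝ) :
    HasSum (fun n : ℕ => (2 * (n : ℝ) + 1) / n.factorial * a ^ n) ((1 + 2 * a) * Real.exp a) := by
  have h1 := hasSum_exp_real a
  have h2 : HasSum (fun n : ℕ => a ^ (n + 1) / n.factorial) (a * Real.exp a) := by
    have h := h1.mul_left a
    rw [show (fun n : ℕ => a * (a ^ n / n.factorial)) = fun n : ℕ => a ^ (n + 1) / n.factorial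
      from funext fun n => by rw [pow_succ]; ring] at h
    exact h
  have h3 : HasSum (fun n : ℕ => (n : ℝ) * a ^ n / n.factorial) (a * Real.exp a) := by
    have hinj : Function.Injective Nat.succ := Nat.succ_injective
    refine (Function.Injective.hasSum_iff hinj ?_).mp ?_
    · intro n hn
      have hn0 : n = 0 := by
        rcases n with _ | m
        · rfl
        · exact absurd ⟨m, rfl⟩ hn
      simp [hn0]
    · have hfe : ((fun n : ℕ => (n : ℝ) * a ^ n / n.factorial) ∘ Nat.succ)
          = fun n : ℕ => a ^ (n + 1) / n.factorial := by
        funext n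
        simp only [Function.comp]
        rw [Nat.factorial_succ]
        push_cast
        have hfac : ((n.factorial : ℝ)) ≠ 0 := Nat.cast_ne_zero.mpr n.factorial_ne_zero
        field_simp
      rw [hfe]
      exact h2
  have hfun : (fun n : ℕ => (2 * (n : ℝ) + 1) / n.factorial * a ^ n)
      = fun n : ℕ => a ^ n / n.factorial + 2 * ((n : ℝ) * a ^ n / n.factorial) := by
    funext n
    have hfac : ((n.factorial : ℝ)) ≠ 0 := Nat.cast_ne_zero.mpr n.factorial_ne_zero
    field_simp
    ring
  rw [hfun, show (1 + 2 * a) * Real.exp a = Real.exp a + 2 * (a * Real.exp a) from by ring]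
  exact h1.add (h3.mul_left 2)

/-- If a measurable `N : [x₋, X] → [L_m, N_m]` (with `0 < L_m ≤ N_m < ∞`) satisfies the
odd moment conditions `∫ N^{−(2n+1)} = 1/(2n+1)` for all `n`, then for every real `L`,
`e^{L²} = ∫_{x₋}^{X} (1 + 2(L/N)²) exp((L/N)²) dx / N`. -/
theorem stmt16 (xm X Lm Nm : ℝ) (hx : xm < X) (hLm : 0 < Lm) (hNm : Lm ≤ Nm)
    (N : ℝ → ℝ) (hmeas : Measurable N)
    (hbd : ∀ x ∈ Set.Icc xm X, Lm ≤ N x ∧ N x ≤ Nm)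
    (hmom : ∀ n : ℕ, (∫ x in xm..X, 1 / (N x) ^ (2 * n + 1)) = 1 / (2 * (n:ℝ) + 1)) :
    ∀ L : ℝ, Real.exp (L ^ 2)
      = ∫ x in xm..X,
          (1 + 2 * (L / N x) ^ 2) * Real.exp ((L / N x) ^ 2) / N x := by
  intro L
  set f : ℕ → ℝ → ℝ := fun n x => (2 * (n : ℝ) + 1) / n.factorial * L ^ (2 * n) / N x ^ (2 * n + 1)
    with hf
  have hNpos : ∀ x ∈ Set.Ioc xm X, 0 < N x := fun x hxx =>
    lt_of_lt_of_le hLm (hbd x (Set.Ioc_subset_Icc_self hxx)).1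
  -- pointwise identity on Ioc
  have hpt : ∀ x ∈ Set.Ioc xm X,
      (1 + 2 * (L / N x) ^ 2) * Real.exp ((L / N x) ^ 2) / N x = ∑' n, f n x := by
    intro x hxx
    have hN := hNpos x hxx
    have hNne : N x ≠ 0 := hN.ne'
    have hs := (key ((L / N x) ^ 2)).div_const (N x)
    have heq : ∀ n : ℕ, (2 * (n : ℝ) + 1) / n.factorial * ((L / N x) ^ 2) ^ n / N x = f n x := by
      intro n
      rw [hf]
      have hpow : ((L / N x) ^ 2) ^ n = L ^ (2 * n) / N x ^ (2 * n) := by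
        rw [← pow_mul, div_pow]
      rw [hpow, mul_div_assoc', div_div, ← pow_succ]
    rw [funext heq] at hs
    exact hs.tsum_eq.symm
  -- integrability of each f n
  have hmf : ∀ n : ℕ, Measurable (f n) := by
    intro n
    exact measurable_const.div (hmeas.pow_const _)
  have hint : ∀ n : ℕ, IntegrableOn (f n) (Set.Ioc xm X) := by
    intro n
    refine Integrable.mono'
      (integrable_const ((2 * (n : ℝ) + 1) / n.factorial * |L| ^ (2 * n) / Lm ^ (2 * n + 1)))
      ((hmf n).aestronglyMeasurable) ?_
    rw [ae_restrict_iff' measurableSet_Ioc]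
    filter_upwards with x hxx
    have hN := hNpos x hxx
    have hLmN : Lm ≤ N x := (hbd x (Set.Ioc_subset_Icc_self hxx)).1
    show ‖(2 * (n : ℝ) + 1) / n.factorial * L ^ (2 * n) / N x ^ (2 * n + 1)‖ ≤ _
    rw [Real.norm_eq_abs, abs_div, abs_mul, abs_div, abs_pow, abs_pow,
      abs_of_nonneg (show (0:ℝ) ≤ 2 * (n:ℝ) + 1 by positivity),
      abs_of_nonneg (show (0:ℝ) ≤ (n.factorial : ℝ) by positivity),
      abs_of_pos hN]
    gcongr
  -- value of each integral
  have hval : ∀ n : ℕ, (∫ x in Set.Ioc xm X, f n x) = L ^ (2 * n) / n.factorial := by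
    intro n
    have h1 : (∫ x in Set.Ioc xm X, f n x)
        = (2 * (n : ℝ) + 1) / n.factorial * L ^ (2 * n)
          * ∫ x in Set.Ioc xm X, 1 / N x ^ (2 * n + 1) := by
      rw [← integral_const_mul]
      congr 1 with x
      rw [hf]
      ring
    rw [h1]
    have hm := hmom n
    rw [intervalIntegral.integral_of_le hx.le] at hm
    rw [hm]
    have h21 : (2 * (n : ℝ) + 1) ≠ 0 := by positivity
    field_simp
  -- norm integral equals integral
  have hnorm : ∀ n : ℕ, (∫ x in Set.Ioc xm X, ‖f n x‖) = L ^ (2 * n) / n.factorial := by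
    intro n
    rw [← hval n]
    apply setIntegral_congr_fun measurableSet_Ioc
    intro x hxx
    have hN := hNpos x hxx
    have hnn : 0 ≤ f n x := by
      show 0 ≤ (2 * (n : ℝ) + 1) / n.factorial * L ^ (2 * n) / N x ^ (2 * n + 1)
      rw [pow_mul]
      positivity
    simp [Real.norm_eq_abs, abs_of_nonneg hnn]
  have hsummable : Summable fun n : ℕ => ∫ x in Set.Ioc xm X, ‖f n x‖ := by
    have hs : Summable fun n : ℕ => L ^ (2 * n) / (n.factorial : ℝ) := by
      have := (hasSum_exp_real (L ^ 2)).summable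
      simp only [← pow_mul] at this
      exact this
    simp only [hnorm]
    exact hs
  -- put it together
  rw [intervalIntegral.integral_of_le hx.le,
    setIntegral_congr_fun measurableSet_Ioc hpt,
    ← integral_tsum_of_summable_integral_norm (fun n => hint n) hsummable]
  have hfinal : HasSum (fun n : ℕ => ∫ x in Set.Ioc xm X, f n x) (Real.exp (L ^ 2)) := by
    have h := hasSum_exp_real (L ^ 2)
    simp only [← pow_mul] at h
    simp only [hval]
    exact h
  exact hfinal.tsum_eq.symm
end
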